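/- Let (𝒜_i)_{i∈I} be subalgebras of a non-commutative probability space (𝒜, φ) that are BMT independent with respect to a digraph G = (I, E). Let {I_j : j ∈ J} be a partition of I into non-empty pairwise disjoint subsets and let ℬ_j be the subalgebra generated by the 𝒜_i with i ∈ I_j. If J carries a total order < such that (i, i') ∈ E and (i', i) ∉ E whenever i ∈ I_j and i' ∈ I_{j'} with j' < j, then the family (ℬ_j)_{j∈J} is monotone independent with respect to this order. -/

import Mathlib

open scoped Classical
open Filter

noncomputable section

/-- The relation defining the kernel of `f` restricted to the index set `S`,
subordinated to the digraph with edge relation `E`: `k ∼ k'` iff `f k = f k'` and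
every `l ∈ S` strictly between `k` and `k'` with `f l ≠ f k` satisfies `(f l, f k) ∈ E`. -/
def kerGRelOn {m : ℕ} {V : Type*} (E : V → V → Prop) (f : Fin m → V)
    (S : Finset (Fin m)) (k k' : Fin m) : Prop :=
  f k = f k' ∧ ∀ l ∈ S, min k k' < l → l < max k k' → f l ≠ f k → E (f l) (f k)

/-- The blocks of the kernel of `f|_S` subordinated to the digraph `E`. -/
def kerGBlocks {m : ℕ} {V : Type*} (E : V → V → Prop) (f : Fin m → V)
    (S : Finset (Fin m)) : Finset (Finset (Fin m)) :=
  S.image fun k => S.filter fun k' => kerGRelOn E f S k k'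

/-- The blocks of the plain kernel `ker[f]` of `f : [m] → V`. -/
def kerBlocks {m : ℕ} {V : Type*} (f : Fin m → V) : Finset (Finset (Fin m)) :=
  Finset.univ.image fun k => Finset.univ.filter fun k' => f k = f k'

/-- The product of `a k` for `k ∈ B`, taken in increasing order of `k`. -/
def blockProd {A : Type*} [Monoid A] {m : ℕ} (a : Fin m → A) (B : Finset (Fin m)) : A :=
  ((B.sort (· ≤ ·)).map a).prod

/-- The edge set of the nesting-crossing graph of the partition `π`, relabeled along `f`:
the pair `(f-label of B, f-label of C)` is an edge whenever `B ≠ C` are blocks of `π` and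
some `l ∈ B` lies strictly between two elements (equivalently, between min and max) of `C`. -/
def nestCrossEdges {m : ℕ} {V : Type*} (π : Finset (Finset (Fin m))) (f : Fin m → V) :
    Set (V × V) :=
  { p | ∃ B ∈ π, ∃ C ∈ π, B ≠ C ∧
      (∃ l ∈ B, ∃ c₁ ∈ C, ∃ c₂ ∈ C, c₁ < l ∧ l < c₂) ∧
      (∃ k ∈ B, f k = p.1) ∧ (∃ k' ∈ C, f k' = p.2) }

/-- A family of (non-unital) subalgebras of a non-commutative probability space `(𝒜, φ)`
is BMT independent with respect to the digraph `E` on the index set `I`. -/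
def BMTIndep {𝒜 : Type*} [Ring 𝒜] [Algebra ℂ 𝒜] (φ : 𝒜 →ₗ[ℂ] ℂ)
    {I : Type*} (E : I → I → Prop) (A : I → NonUnitalSubalgebra ℂ 𝒜) : Prop :=
  ∀ (m : ℕ), 1 ≤ m → ∀ (idx : Fin m → I) (a : Fin m → 𝒜),
    (∀ k, a k ∈ A (idx k)) →
    φ (List.ofFn a).prod = ∏ B ∈ kerGBlocks E idx Finset.univ, φ (blockProd a B)

/-- Random variables `a 0, …, a (N-1)` are BMT independent with respect to the digraph `E`. -/
def BMTIndepVars {𝒜 : Type*} [Ring 𝒜] [Algebra ℂ 𝒜] (φ : 𝒜 →ₗ[ℂ] ℂ)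
    {N : ℕ} (E : Fin N → Fin N → Prop) (a : Fin N → 𝒜) : Prop :=
  ∀ (m : ℕ) (idx : Fin m → Fin N),
    φ (List.ofFn fun k => a (idx k)).prod
      = ∏ B ∈ kerGBlocks E idx Finset.univ, φ (blockProd (fun k => a (idx k)) B)


section KerGen

variable {m : ℕ} {V : Type*} {E : V → V → Prop} {f : Fin m → V} {S T : Finset (Fin m)}

lemma kerGRelOn_refl (k : Fin m) : kerGRelOn E f S k k := by
  refine ⟨rfl, fun l _ h1 h2 _ => absurd (h1.trans h2) ?_⟩
  simp

lemma kerGRelOn_symm {k k' : Fin m} (h : kerGRelOn E f S k k') : kerGRelOn E f S k' k := by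
  obtain ⟨h0, h1⟩ := h
  refine ⟨h0.symm, fun l hl hm hM hne => ?_⟩
  rw [min_comm] at hm; rw [max_comm] at hM
  rw [← h0]
  exact h1 l hl hm hM (h0 ▸ hne)

private lemma nat_between (a b c x : ℕ) (h1 : min a c < x) (h2 : x < max a c) :
    (min a b < x ∧ x < max a b) ∨ x = b ∨ (min b c < x ∧ x < max b c) := by omega

lemma kerGRelOn_trans {k k' k'' : Fin m} (h : kerGRelOn E f S k k')
    (h' : kerGRelOn E f S k' k'') : kerGRelOn E f S k k'' := by
  obtain ⟨h0, h1⟩ := h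
  obtain ⟨h0', h1'⟩ := h'
  refine ⟨h0.trans h0', fun l hl hm hM hne => ?_⟩
  have hmin : ∀ x y : Fin m, (min x y).val = min x.val y.val := fun x y =>
    Monotone.map_min (f := Fin.val) (fun _ _ h => h)
  have hmax : ∀ x y : Fin m, (max x y).val = max x.val y.val := fun x y =>
    Monotone.map_max (f := Fin.val) (fun _ _ h => h)
  have := nat_between k.val k'.val k''.val l.val (by rw [← hmin]; exact hm)
    (by rw [← hmax]; exact hM)
  rcases this with ⟨u1, u2⟩ | u | ⟨u1, u2⟩
  · exact h1 l hl (by rw [Fin.lt_def, hmin]; exact u1) (by rw [Fin.lt_def, hmax]; exact u2) hne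
  · exact absurd (show f l = f k by rw [show l = k' from Fin.ext u, ← h0]) hne
  · rw [h0]
    exact h1' l hl (by rw [Fin.lt_def, hmin]; exact u1) (by rw [Fin.lt_def, hmax]; exact u2)
      (fun hc => hne (by rw [hc, h0]))

/-- the block of `k`. -/
def blockOf (E : V → V → Prop) (f : Fin m → V) (S : Finset (Fin m)) (k : Fin m) :
    Finset (Fin m) :=
  S.filter fun k' => kerGRelOn E f S k k'

lemma mem_blockOf_self {k : Fin m} (hk : k ∈ S) : k ∈ blockOf E f S k :=
  Finset.mem_filter.2 ⟨hk, kerGRelOn_refl k⟩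

lemma blockOf_eq_of_rel {k k' : Fin m} (h : kerGRelOn E f S k k') :
    blockOf E f S k = blockOf E f S k' := by
  ext x
  simp only [blockOf, Finset.mem_filter, and_congr_right_iff]
  exact fun _ => ⟨fun hx => kerGRelOn_trans (kerGRelOn_symm h) hx,
    fun hx => kerGRelOn_trans h hx⟩

lemma kerGBlocks_eq_image : kerGBlocks E f S = S.image (blockOf E f S) := rfl

lemma blockOf_subset {k : Fin m} : blockOf E f S k ⊆ S := Finset.filter_subset _ _

lemma mem_kerGBlocks_nonempty {B : Finset (Fin m)} (h : B ∈ kerGBlocks E f S) : B.Nonempty := by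
  obtain ⟨k, hk, rfl⟩ := Finset.mem_image.1 h
  exact ⟨k, mem_blockOf_self hk⟩

lemma mem_kerGBlocks_subset {B : Finset (Fin m)} (h : B ∈ kerGBlocks E f S) : B ⊆ S := by
  obtain ⟨k, hk, rfl⟩ := Finset.mem_image.1 h
  exact blockOf_subset

lemma kerGRelOn_mono (hTS : T ⊆ S) {k k' : Fin m} (h : kerGRelOn E f S k k') :
    kerGRelOn E f T k k' :=
  ⟨h.1, fun l hl => h.2 l (hTS hl)⟩

/-- splitting of the kernel blocks along a "closed" subset `T`. -/
lemma kerGBlocks_split (hTS : T ⊆ S)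
    (hcross : ∀ k ∈ T, ∀ k' ∈ S \ T, ¬ kerGRelOn E f S k k')
    (hconv : ∀ k ∈ T, ∀ k' ∈ T, ∀ l ∈ S, min k k' < l → l < max k k' → l ∈ T)
    (hrest : ∀ k ∈ S \ T, ∀ k' ∈ S \ T, kerGRelOn E f (S \ T) k k' → kerGRelOn E f S k k') :
    kerGBlocks E f S = kerGBlocks E f T ∪ kerGBlocks E f (S \ T) := by
  have hbT : ∀ k ∈ T, blockOf E f S k = blockOf E f T k := by
    intro k hk
    ext x
    simp only [blockOf, Finset.mem_filter]
    constructor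
    · rintro ⟨hxS, hrel⟩
      by_cases hxT : x ∈ T
      · exact ⟨hxT, kerGRelOn_mono hTS hrel⟩
      · exact absurd hrel (hcross k hk x (Finset.mem_sdiff.2 ⟨hxS, hxT⟩))
    · rintro ⟨hxT, h0, h1⟩
      exact ⟨hTS hxT, h0, fun l hl hm hM hne => h1 l (hconv k hk x hxT l hl hm hM) hm hM hne⟩
  have hbC : ∀ k ∈ S \ T, blockOf E f S k = blockOf E f (S \ T) k := by
    intro k hk
    ext x
    simp only [blockOf, Finset.mem_filter]
    constructor
    · rintro ⟨hxS, hrel⟩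
      by_cases hxT : x ∈ T
      · exact absurd (kerGRelOn_symm hrel) (hcross x hxT k hk)
      · exact ⟨Finset.mem_sdiff.2 ⟨hxS, hxT⟩, kerGRelOn_mono Finset.sdiff_subset hrel⟩
    · rintro ⟨hxC, hrel⟩
      exact ⟨(Finset.mem_sdiff.1 hxC).1, hrest k hk x hxC hrel⟩
  have hS : S = T ∪ (S \ T) := (Finset.union_sdiff_of_subset hTS).symm
  rw [kerGBlocks_eq_image, kerGBlocks_eq_image, kerGBlocks_eq_image]
  calc S.image (blockOf E f S)
      = (T ∪ (S \ T)).image (blockOf E f S) := by rw [← hS]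
    _ = T.image (blockOf E f S) ∪ (S \ T).image (blockOf E f S) := Finset.image_union _ _
    _ = T.image (blockOf E f T) ∪ (S \ T).image (blockOf E f (S \ T)) := by
        congr 1
        · exact Finset.image_congr fun k hk => hbT k hk
        · exact Finset.image_congr fun k hk => hbC k hk

/-- the two halves of the split have disjoint block sets (unless we take products it suffices). -/
lemma prod_kerGBlocks_split (F : Finset (Fin m) → ℂ) (hTS : T ⊆ S)
    (hcross : ∀ k ∈ T, ∀ k' ∈ S \ T, ¬ kerGRelOn E f S k k')
    (hconv : ∀ k ∈ T, ∀ k' ∈ T, ∀ l ∈ S, min k k' < l → l < max k k' → l ∈ T)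
    (hrest : ∀ k ∈ S \ T, ∀ k' ∈ S \ T, kerGRelOn E f (S \ T) k k' → kerGRelOn E f S k k') :
    ∏ B ∈ kerGBlocks E f S, F B
      = (∏ B ∈ kerGBlocks E f T, F B) * ∏ B ∈ kerGBlocks E f (S \ T), F B := by
  rw [kerGBlocks_split hTS hcross hconv hrest]
  refine Finset.prod_union ?_
  rw [Finset.disjoint_left]
  intro B hB hB'
  obtain ⟨x, hx⟩ := mem_kerGBlocks_nonempty hB
  have h1 := mem_kerGBlocks_subset hB hx
  have h2 := mem_kerGBlocks_subset hB' hx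
  exact (Finset.mem_sdiff.1 h2).2 h1

end KerGen

section SortHelp

variable {α β : Type*} [LinearOrder α] [LinearOrder β] [DecidableEq α] [DecidableEq β]

lemma sort_eq_of_list (S : Finset α) (l : List α) (hs : l.Pairwise (· ≤ ·)) (hn : l.Nodup)
    (hm : ∀ x, x ∈ l ↔ x ∈ S) : S.sort (· ≤ ·) = l := by
  have hS : l.toFinset = S := by
    ext x; simp [List.mem_toFinset, hm]
  rw [← hS]
  exact (List.toFinset_sort _ hn).2 hs

lemma sort_image {g : α → β} (hg : StrictMono g) (B : Finset α) :
    (B.image g).sort (· ≤ ·) = (B.sort (· ≤ ·)).map g := by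
  refine sort_eq_of_list _ _ ?_ ?_ ?_
  · exact List.Pairwise.map g (fun a b h => hg.monotone h) (Finset.pairwise_sort _ _)
  · exact (Finset.sort_nodup _ _).map hg.injective
  · intro x
    simp only [List.mem_map, Finset.mem_sort, Finset.mem_image]

lemma sort_union (X Y : Finset α) (hXY : ∀ x ∈ X, ∀ y ∈ Y, x < y) :
    (X ∪ Y).sort (· ≤ ·) = X.sort (· ≤ ·) ++ Y.sort (· ≤ ·) := by
  refine sort_eq_of_list _ _ ?_ ?_ ?_
  · rw [List.pairwise_append]
    exact ⟨Finset.pairwise_sort _ _, Finset.pairwise_sort _ _,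
      fun x hx y hy => (hXY x (Finset.mem_sort _ |>.1 hx) y (Finset.mem_sort _ |>.1 hy)).le⟩
  · rw [List.nodup_append]
    refine ⟨Finset.sort_nodup _ _, Finset.sort_nodup _ _, fun x hx y hy => ?_⟩
    exact (hXY x (Finset.mem_sort _ |>.1 hx) y (Finset.mem_sort _ |>.1 hy)).ne
  · intro x
    simp [List.mem_append, Finset.mem_sort, Finset.mem_union]

end SortHelp

section Subword

variable {𝒜 : Type*} [Ring 𝒜] [Algebra ℂ 𝒜] (φ : 𝒜 →ₗ[ℂ] ℂ) {I : Type*}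
  (E : I → I → Prop) (A : I → NonUnitalSubalgebra ℂ 𝒜)

lemma subword_formula (hφ : φ 1 = 1) (hindep : BMTIndep φ E A) {M : ℕ}
    (a : Fin M → 𝒜) (ι : Fin M → I) (ha : ∀ t, a t ∈ A (ι t)) (S : Finset (Fin M)) :
    φ ((S.sort (· ≤ ·)).map a).prod = ∏ B ∈ kerGBlocks E ι S, φ (blockProd a B) := by
  rcases eq_or_ne S ∅ with rfl | hS
  · simp [kerGBlocks, hφ]
  have hc : 1 ≤ S.card := Finset.card_pos.2 (Finset.nonempty_iff_ne_empty.2 hS)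
  set e : Fin S.card ↪o Fin M := S.orderEmbOfFin rfl with he
  have he_mem : ∀ q, e q ∈ S := fun q => Finset.orderEmbOfFin_mem S rfl q
  have he_surj : ∀ x ∈ S, ∃ q, e q = x := by
    intro x hx
    have := Finset.range_orderEmbOfFin S (rfl : S.card = S.card)
    rw [Set.ext_iff] at this
    exact (this x).2 hx
  have he_mono : StrictMono e := e.strictMono
  have hrel : ∀ q q', kerGRelOn E (fun p => ι (e p)) Finset.univ q q'
      ↔ kerGRelOn E ι S (e q) (e q') := by
    intro q q'
    have hmin : e (min q q') = min (e q) (e q') := he_mono.monotone.map_min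
    have hmax : e (max q q') = max (e q) (e q') := he_mono.monotone.map_max
    constructor
    · rintro ⟨h0, h1⟩
      refine ⟨h0, fun l hl hm hM hne => ?_⟩
      obtain ⟨r, rfl⟩ := he_surj l hl
      exact h1 r (Finset.mem_univ r) (he_mono.lt_iff_lt.1 (hmin ▸ hm))
        (he_mono.lt_iff_lt.1 (hmax ▸ hM)) hne
    · rintro ⟨h0, h1⟩
      refine ⟨h0, fun r _ hm hM hne => ?_⟩
      exact h1 (e r) (he_mem r) (hmin ▸ he_mono hm) (hmax ▸ he_mono hM) hne
  have hblock : ∀ q, blockOf E ι S (e q)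
      = (blockOf E (fun p => ι (e p)) Finset.univ q).image e := by
    intro q
    ext x
    simp only [blockOf, Finset.mem_filter, Finset.mem_image, Finset.mem_univ, true_and]
    constructor
    · rintro ⟨hxS, hrelx⟩
      obtain ⟨r, rfl⟩ := he_surj x hxS
      exact ⟨r, (hrel q r).2 hrelx, rfl⟩
    · rintro ⟨r, hrelr, rfl⟩
      exact ⟨he_mem r, (hrel q r).1 hrelr⟩
  have hblocks : kerGBlocks E ι S
      = (kerGBlocks E (fun p => ι (e p)) Finset.univ).image (fun B => B.image e) := by
    rw [kerGBlocks_eq_image, kerGBlocks_eq_image]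
    ext B
    simp only [Finset.mem_image]
    constructor
    · rintro ⟨k, hk, rfl⟩
      obtain ⟨q, rfl⟩ := he_surj k hk
      exact ⟨blockOf E (fun p => ι (e p)) Finset.univ q, ⟨q, Finset.mem_univ q, rfl⟩,
        (hblock q).symm⟩
    · rintro ⟨B', ⟨q, _, rfl⟩, rfl⟩
      exact ⟨e q, he_mem q, hblock q⟩
  have hbp : ∀ B : Finset (Fin S.card), blockProd a (B.image e)
      = blockProd (fun p => a (e p)) B := by
    intro B
    unfold blockProd
    rw [sort_image he_mono, List.map_map]
    rfl
  have hsort : S.sort (· ≤ ·) = List.ofFn (fun q => e q) := by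
    refine List.ext_getElem (by simp) ?_
    intro i h1 h2
    rw [List.getElem_ofFn]
    simpa using (Finset.orderEmbOfFin_apply S rfl ⟨i, by simpa using h1⟩).symm
  have h1 := hindep S.card hc (fun p => ι (e p)) (fun p => a (e p)) (fun p => ha (e p))
  rw [hsort]
  have hmap : (List.ofFn fun q : Fin S.card => e q).map a = List.ofFn fun q => a (e q) := by
    rw [List.map_ofFn]; rfl
  rw [hmap, h1, hblocks, Finset.prod_image ?_]
  · exact Finset.prod_congr rfl fun B _ => by rw [hbp]
  · intro B1 _ B2 _ h
    exact Finset.image_injective e.injective h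

end Subword

namespace BMTAux

variable {m : ℕ}

/-- offsets of the concatenation of words of lengths `n k`. -/
def offF (n : Fin m → ℕ) : ℕ → ℕ := fun s =>
  ∑ k ∈ Finset.range s, (if h : k < m then n ⟨k, h⟩ else 0)

variable {n : Fin m → ℕ}

lemma offF_mono : Monotone (offF n) := by
  intro s s' h
  exact Finset.sum_le_sum_of_subset (Finset.range_subset_range.2 h)

lemma offF_succ (s : ℕ) : offF n (s + 1) = offF n s + (if h : s < m then n ⟨s, h⟩ else 0) :=
  Finset.sum_range_succ _ s

lemma offF_zero : offF n 0 = 0 := rfl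

/-- index of the segment containing position `t`. -/
def segIdx (n : Fin m → ℕ) (t : ℕ) : ℕ := Nat.findGreatest (fun s => offF n s ≤ t) m

lemma segIdx_spec {t : ℕ} (ht : t < offF n m) :
    segIdx n t < m ∧ offF n (segIdx n t) ≤ t ∧ t < offF n (segIdx n t + 1) := by
  have h0 : offF n (segIdx n t) ≤ t :=
    Nat.findGreatest_spec (P := fun s => offF n s ≤ t) (Nat.zero_le m)
      (by show offF n 0 ≤ t; rw [offF_zero]; exact Nat.zero_le t)
  have hle : segIdx n t ≤ m := Nat.findGreatest_le m
  have hlt : segIdx n t < m := by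
    rcases lt_or_eq_of_le hle with h | h
    · exact h
    · rw [h] at h0; omega
  refine ⟨hlt, h0, ?_⟩
  by_contra hc
  exact Nat.findGreatest_is_greatest (P := fun s => offF n s ≤ t) (Nat.lt_succ_self _) hlt
    (not_lt.1 hc)

lemma segIdx_eq {t s : ℕ} (hs : s < m) (h1 : offF n s ≤ t) (h2 : t < offF n (s + 1)) :
    segIdx n t = s := by
  have hge : s ≤ segIdx n t := Nat.le_findGreatest hs.le h1
  rcases eq_or_lt_of_le hge with h | h
  · exact h.symm
  · have h0 : offF n (segIdx n t) ≤ t :=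
      Nat.findGreatest_spec (P := fun s => offF n s ≤ t) (Nat.zero_le m)
        (by show offF n 0 ≤ t; rw [offF_zero]; exact Nat.zero_le t)
    have h3 : offF n (s + 1) ≤ offF n (segIdx n t) := offF_mono h
    omega

/-- the position of letter `j` of word `s` inside the concatenation. -/
def embF (n : Fin m → ℕ) (s : Fin m) (j : Fin (n s)) : Fin (offF n m) :=
  ⟨offF n s.val + j.val, by
    have h1 : offF n (s.val + 1) = offF n s.val + n s := by
      rw [offF_succ, dif_pos s.isLt, Fin.eta]
    have h2 : offF n (s.val + 1) ≤ offF n m := offF_mono s.isLt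
    have h3 := j.isLt
    omega⟩

/-- segment of a position. -/
def σF (n : Fin m → ℕ) (t : Fin (offF n m)) : Fin m :=
  ⟨segIdx n t.val, (segIdx_spec t.isLt).1⟩

/-- in-segment index of a position. -/
def τF (n : Fin m → ℕ) (t : Fin (offF n m)) : Fin (n (σF n t)) :=
  ⟨t.val - offF n (σF n t).val, by
    have h2 : offF n (σF n t).val ≤ t.val := (segIdx_spec (n := n) t.isLt).2.1
    have h3 : t.val < offF n ((σF n t).val + 1) := (segIdx_spec (n := n) t.isLt).2.2
    have h4 : offF n ((σF n t).val + 1) = offF n (σF n t).val + n (σF n t) := by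
      rw [offF_succ, dif_pos (σF n t).isLt, Fin.eta]
    omega⟩

lemma σF_embF (s : Fin m) (j : Fin (n s)) : σF n (embF n s j) = s := by
  refine Fin.ext ?_
  refine segIdx_eq s.isLt (Nat.le_add_right _ _) ?_
  have h3 := j.isLt
  show offF n s.val + j.val < offF n (s.val + 1)
  rw [offF_succ, dif_pos s.isLt, Fin.eta]
  omega

lemma τF_embF_val (s : Fin m) (j : Fin (n s)) : (τF n (embF n s j)).val = j.val := by
  have h : (σF n (embF n s j)).val = s.val := congrArg Fin.val (σF_embF s j)
  have h0 : (τF n (embF n s j)).val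
      = (embF n s j).val - offF n (σF n (embF n s j)).val := rfl
  rw [h0, h]
  show offF n s.val + j.val - offF n s.val = j.val
  omega

lemma embF_σF_τF (t : Fin (offF n m)) : embF n (σF n t) (τF n t) = t := by
  refine Fin.ext ?_
  have h2 : offF n (σF n t).val ≤ t.val := (segIdx_spec (n := n) t.isLt).2.1
  show offF n (σF n t).val + (t.val - offF n (σF n t).val) = t.val
  omega

lemma embF_lt_embF_of_lt {s s' : Fin m} (h : s < s') (j : Fin (n s)) (j' : Fin (n s')) :
    embF n s j < embF n s' j' := by
  simp only [embF, Fin.lt_def]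
  have h1 : offF n (s.val + 1) = offF n s.val + n s := by
    rw [offF_succ, dif_pos s.isLt, Fin.eta]
  have h2 : offF n (s.val + 1) ≤ offF n s'.val := offF_mono h
  have h3 := j.isLt
  omega

lemma embF_lt_embF_of_val_lt {s : Fin m} {j j' : Fin (n s)} (h : j.val < j'.val) :
    embF n s j < embF n s j' := by
  simp only [embF, Fin.lt_def]
  omega

lemma lt_of_σF_lt {t t' : Fin (offF n m)} (h : σF n t < σF n t') : t < t' := by
  have h1 := embF_σF_τF (n := n) t
  have h2 := embF_σF_τF (n := n) t'
  rw [← h1, ← h2]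
  exact embF_lt_embF_of_lt h _ _

lemma σF_mono {t t' : Fin (offF n m)} (h : t ≤ t') : σF n t ≤ σF n t' := by
  by_contra hc
  exact absurd (lt_of_σF_lt (not_le.1 hc)) (not_lt.2 h)

/-- the set of positions of segment `s`. -/
def segT (n : Fin m → ℕ) (s : Fin m) : Finset (Fin (offF n m)) :=
  Finset.univ.filter fun t => σF n t = s

lemma mem_segT {s : Fin m} {t : Fin (offF n m)} : t ∈ segT n s ↔ σF n t = s := by
  simp [segT]

lemma segT_sort (s : Fin m) :
    (segT n s).sort (· ≤ ·) = List.ofFn (fun j : Fin (n s) => embF n s j) := by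
  refine sort_eq_of_list _ _ ?_ ?_ ?_
  · rw [List.pairwise_ofFn]
    exact fun i j h => (embF_lt_embF_of_val_lt h).le
  · rw [List.nodup_ofFn]
    intro i j h
    by_contra hc
    rcases Ne.lt_or_gt hc with h' | h'
    · exact absurd h (embF_lt_embF_of_val_lt h').ne
    · exact absurd h.symm (embF_lt_embF_of_val_lt h').ne
  · intro x
    rw [List.mem_ofFn, mem_segT]
    constructor
    · rintro ⟨j, rfl⟩
      exact σF_embF s j
    · intro h
      have hv : (σF n x).val = s.val := congrArg Fin.val h
      refine ⟨⟨(τF n x).val, by rw [← h]; exact (τF n x).isLt⟩, ?_⟩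
      refine Fin.ext ?_
      show offF n s.val + (τF n x).val = x.val
      rw [← hv]
      exact congrArg Fin.val (embF_σF_τF (n := n) x)

section Prods

variable {G : Type*} [Monoid G] (u : (k : Fin m) → Fin (n k) → G)

/-- the flattened word. -/
def aF : Fin (offF n m) → G := fun t => u (σF n t) (τF n t)

/-- the products of the individual words. -/
def bF : Fin m → G := fun k => (List.ofFn (u k)).prod

lemma u_congr {k k' : Fin m} (h : k = k') {j : Fin (n k)} {j' : Fin (n k')}
    (hj : j.val = j'.val) : u k j = u k' j' := by
  subst h
  rw [Fin.ext hj]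

lemma segT_map_prod (s : Fin m) :
    (((segT n s).sort (· ≤ ·)).map (aF u)).prod = bF u s := by
  rw [segT_sort, List.map_ofFn]
  unfold bF
  refine congrArg List.prod (congrArg List.ofFn (funext fun j => ?_))
  exact u_congr u (σF_embF s j) (τF_embF_val s j)

/-- positions with segment `< s`. -/
def loT (n : Fin m → ℕ) (s : ℕ) : Finset (Fin (offF n m)) :=
  Finset.univ.filter fun t => (σF n t).val < s

/-- positions with segment `≥ s`. -/
def hiT (n : Fin m → ℕ) (s : ℕ) : Finset (Fin (offF n m)) :=
  Finset.univ.filter fun t => s ≤ (σF n t).val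

lemma loT_zero : loT n 0 = ∅ := by simp [loT]

lemma hiT_top : hiT n m = ∅ := by
  refine Finset.eq_empty_of_forall_notMem fun t ht => ?_
  have := (σF n t).isLt
  simp only [hiT, Finset.mem_filter] at ht
  omega

lemma hiT_zero : hiT n 0 = Finset.univ := by simp [hiT]

lemma loT_succ {s : ℕ} (hs : s < m) : loT n (s + 1) = loT n s ∪ segT n ⟨s, hs⟩ := by
  ext t
  simp only [loT, segT, Finset.mem_union, Finset.mem_filter, Finset.mem_univ, true_and,
    Fin.ext_iff]
  omega

lemma hiT_succ {s : ℕ} (hs : s < m) : hiT n s = segT n ⟨s, hs⟩ ∪ hiT n (s + 1) := by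
  ext t
  simp only [hiT, segT, Finset.mem_union, Finset.mem_filter, Finset.mem_univ, true_and,
    Fin.ext_iff]
  omega

lemma hiT_sdiff {s : ℕ} (hs : s < m) : hiT n s \ segT n ⟨s, hs⟩ = hiT n (s + 1) := by
  ext t
  simp only [hiT, segT, Finset.mem_sdiff, Finset.mem_filter, Finset.mem_univ, true_and,
    Fin.ext_iff]
  omega

lemma segT_subset_hiT {s : ℕ} (hs : s < m) : segT n ⟨s, hs⟩ ⊆ hiT n s := by
  intro t ht
  rw [mem_segT] at ht
  simp only [hiT, Finset.mem_filter, Finset.mem_univ, true_and]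
  rw [ht]

lemma loT_prod : ∀ s : ℕ, s ≤ m →
    (((loT n s).sort (· ≤ ·)).map (aF u)).prod = ((List.ofFn (bF u)).take s).prod := by
  intro s
  induction s with
  | zero => intro _; simp [loT_zero]
  | succ s ih =>
    intro hs
    have hsm : s < m := hs
    rw [loT_succ hsm, sort_union _ _ ?_, List.map_append, List.prod_append, ih hsm.le,
      segT_map_prod, List.prod_take_succ _ _ (by simpa using hsm), List.getElem_ofFn]
    intro x hx y hy
    simp only [loT, Finset.mem_filter] at hx
    rw [mem_segT] at hy
    refine lt_of_σF_lt ?_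
    rw [hy, Fin.lt_def]
    exact hx.2

lemma hiT_prod : ∀ d s : ℕ, s + d = m →
    (((hiT n s).sort (· ≤ ·)).map (aF u)).prod = ((List.ofFn (bF u)).drop s).prod := by
  intro d
  induction d with
  | zero =>
    intro s hs
    subst hs
    simp [hiT_top, List.drop_of_length_le]
  | succ d ih =>
    intro s hs
    have hsm : s < m := by omega
    rw [hiT_succ hsm, sort_union _ _ ?_, List.map_append, List.prod_append, ih (s+1) (by omega),
      segT_map_prod]
    · conv_rhs => rw [List.drop_eq_getElem_cons
        (show s < (List.ofFn (bF u)).length by simpa using hsm)]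
      rw [List.prod_cons, List.getElem_ofFn]
    · intro x hx y hy
      rw [mem_segT] at hx
      simp only [hiT, Finset.mem_filter] at hy
      refine lt_of_σF_lt ?_
      rw [hx, Fin.lt_def]
      exact hy.2

lemma univ_sort_prod :
    (((Finset.univ : Finset (Fin (offF n m))).sort (· ≤ ·)).map (aF u)).prod
      = (List.ofFn (bF u)).prod := by
  rw [← hiT_zero]
  rw [hiT_prod u m 0 (by omega)]
  simp

lemma univ_sdiff_segT {kk : ℕ} (hkk : kk < m) :
    (Finset.univ : Finset (Fin (offF n m))) \ segT n ⟨kk, hkk⟩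
      = loT n kk ∪ hiT n (kk + 1) := by
  ext t
  simp only [loT, hiT, segT, Finset.mem_sdiff, Finset.mem_union, Finset.mem_filter,
    Finset.mem_univ, true_and, Fin.ext_iff]
  omega

lemma compl_seg_prod {kk : ℕ} (hkk : kk < m) :
    ((((Finset.univ : Finset (Fin (offF n m))) \ segT n ⟨kk, hkk⟩).sort (· ≤ ·)).map
        (aF u)).prod
      = ((List.ofFn (bF u)).eraseIdx kk).prod := by
  rw [univ_sdiff_segT hkk, sort_union _ _ ?_, List.map_append, List.prod_append,
    loT_prod u kk hkk.le, hiT_prod u (m - (kk+1)) (kk+1) (by omega),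
    List.eraseIdx_eq_take_drop_succ, List.prod_append]
  intro x hx y hy
  simp only [loT, Finset.mem_filter] at hx
  simp only [hiT, Finset.mem_filter] at hy
  refine lt_of_σF_lt ?_
  rw [Fin.lt_def]
  omega

end Prods

end BMTAux


section ListHelp
variable {G : Type*}

lemma ofFn_update [Monoid G] {m : ℕ} (c : Fin m → G) (k : Fin m) (x : G) :
    List.ofFn (Function.update c k x) = (List.ofFn c).set k.val x := by
  refine List.ext_getElem (by simp) ?_
  intro i h1 h2
  rw [List.getElem_ofFn]
  by_cases hik : i = (k : ℕ)
  · subst hik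
    rw [List.getElem_set_self (by simpa using k.isLt)]
    have hk : (⟨(k : ℕ), by simpa using h1⟩ : Fin m) = k := Fin.ext rfl
    rw [hk, Function.update_self]
  · rw [List.getElem_set_ne (Ne.symm hik), List.getElem_ofFn]
    exact Function.update_of_ne
      (show (⟨i, by simpa using h1⟩ : Fin m) ≠ k from fun hc => hik (congrArg Fin.val hc)) x c

lemma take_set_of_le (l : List G) {k s : ℕ} (z : G) (h : s ≤ k) :
    (l.set k z).take s = l.take s := by
  refine List.ext_getElem (by simp) ?_
  intro i h1 h2
  rw [List.getElem_take, List.getElem_take, List.getElem_set_ne (by simp at h1; omega)]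

lemma drop_set_of_lt (l : List G) {k s : ℕ} (z : G) (h : k < s) :
    (l.set k z).drop s = l.drop s := by
  refine List.ext_getElem (by simp) ?_
  intro i h1 h2
  rw [List.getElem_drop, List.getElem_drop, List.getElem_set_ne (by omega)]

lemma take_set_of_lt (l : List G) {k s : ℕ} (z : G) (h : k < s) :
    (l.set k z).take s = (l.take s).set k z := by
  refine List.ext_getElem (by simp) ?_
  intro i h1 h2
  by_cases hik : i = k
  · subst hik
    have hi : i < l.length := by simp at h1; omega
    rw [List.getElem_take, List.getElem_set_self (l := l) (by simpa using hi),
      List.getElem_set_self (l := l.take s) (by simp; omega)]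
  · rw [List.getElem_take, List.getElem_set_ne (Ne.symm hik), List.getElem_set_ne (Ne.symm hik),
      List.getElem_take]

lemma drop_set_of_le (l : List G) {k s : ℕ} (z : G) (h : s ≤ k) :
    (l.set k z).drop s = (l.drop s).set (k - s) z := by
  refine List.ext_getElem (by simp) ?_
  intro i h1 h2
  by_cases hik : s + i = k
  · subst hik
    rw [List.getElem_drop]
    rw [List.getElem_set_self (l := l) (by simp at h1 ⊢; omega)]
    rw [List.getElem_set, if_pos (by omega)]
  · rw [List.getElem_drop, List.getElem_set_ne (by omega), List.getElem_set_ne (by omega),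
      List.getElem_drop]

end ListHelp

section WordCase
open BMTAux

variable {𝒜 : Type*} [Ring 𝒜] [Algebra ℂ 𝒜] (φ : 𝒜 →ₗ[ℂ] ℂ)
  {I J : Type*} [LinearOrder J] (E : I → I → Prop)
  (A : I → NonUnitalSubalgebra ℂ 𝒜) (P : J → Set I)

variable {m : ℕ} {idx : Fin m → J} {n : Fin m → ℕ}
  {u : (k : Fin m) → Fin (n k) → 𝒜} {lab : (k : Fin m) → Fin (n k) → I}

/-- labels of the flattened word. -/
def ιF {m : ℕ} {n : Fin m → ℕ} (lab : (k : Fin m) → Fin (n k) → I) :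
    Fin (offF n m) → I := fun t => lab (σF n t) (τF n t)

lemma glab (hdisj : ∀ j j', j ≠ j' → Disjoint (P j) (P j'))
    (hlab : ∀ k j, lab k j ∈ P (idx k)) {t t' : Fin (offF n m)}
    (h : ιF lab t = ιF lab t') : idx (σF n t) = idx (σF n t') := by
  by_contra hc
  have h1 : ιF lab t ∈ P (idx (σF n t)) := hlab _ _
  have h2 : ιF lab t ∈ P (idx (σF n t')) := by rw [h]; exact hlab _ _
  exact Set.disjoint_left.1 (hdisj _ _ hc) h1 h2

lemma blocked (hn : ∀ k, 0 < n k)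
    (hdisj : ∀ j j', j ≠ j' → Disjoint (P j) (P j'))
    (hlab : ∀ k j, lab k j ∈ P (idx k))
    (hEdge : ∀ j j', j' < j → ∀ i ∈ P j, ∀ i' ∈ P j', E i i' ∧ ¬ E i' i)
    (S' : Finset (Fin (offF n m))) {k₀ k₁ : Fin (offF n m)} (tt : Fin m)
    (h1 : min (σF n k₀) (σF n k₁) < tt) (h2 : tt < max (σF n k₀) (σF n k₁))
    (h3 : idx tt < idx (σF n k₀)) (h4 : segT n tt ⊆ S') :
    ¬ kerGRelOn E (ιF lab) S' k₀ k₁ := by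
  rintro ⟨h0, hcond⟩
  set l := embF n tt ⟨0, hn tt⟩ with hl
  have hσl : σF n l = tt := σF_embF _ _
  have hmono : Monotone (σF n) := fun _ _ h => σF_mono h
  have hminσ : σF n (min k₀ k₁) = min (σF n k₀) (σF n k₁) := hmono.map_min
  have hmaxσ : σF n (max k₀ k₁) = max (σF n k₀) (σF n k₁) := hmono.map_max
  have hlm : min k₀ k₁ < l := lt_of_σF_lt (by rw [hσl, hminσ]; exact h1)
  have hlM : l < max k₀ k₁ := lt_of_σF_lt (by rw [hσl, hmaxσ]; exact h2)
  have hmemP : ιF lab l ∈ P (idx tt) := by rw [← hσl]; exact hlab _ _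
  have hne : ιF lab l ≠ ιF lab k₀ := by
    intro hc
    have := glab (P := P) hdisj hlab hc
    rw [hσl] at this
    exact h3.ne this
  have hE := hcond l (h4 (mem_segT.2 hσl)) hlm hlM hne
  exact (hEdge (idx (σF n k₀)) (idx tt) h3 (ιF lab k₀) (hlab _ _) (ιF lab l) hmemP).2 hE

/-- strictly decreasing up to `kk`. -/
lemma chainDec {kk : ℕ} (hk : kk < m)
    (hdec : ∀ (j : ℕ), j + 1 ≤ kk → ∀ (ha : j + 1 < m) (hb : j < m),
      idx ⟨j + 1, ha⟩ < idx ⟨j, hb⟩) :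
    ∀ p q : Fin m, p < q → q.val ≤ kk → idx q < idx p := by
  suffices H : ∀ d (pv : ℕ) (h1 : pv + d + 1 < m), pv + d + 1 ≤ kk →
      idx ⟨pv + d + 1, h1⟩ < idx ⟨pv, by omega⟩ by
    intro p q hpq hqk
    rw [Fin.lt_def] at hpq
    have hqm := q.isLt
    have h := H (q.val - p.val - 1) p.val (by omega) (by omega)
    have e1 : (⟨p.val + (q.val - p.val - 1) + 1, by omega⟩ : Fin m) = q :=
      Fin.ext (show p.val + (q.val - p.val - 1) + 1 = q.val by omega)
    have e2 : (⟨p.val, by omega⟩ : Fin m) = p := Fin.ext rfl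
    rwa [e1, e2] at h
  intro d
  induction d with
  | zero =>
    intro pv h1 h2
    exact hdec pv (by omega) (by omega) (by omega)
  | succ d ih =>
    intro pv h1 h2
    exact lt_trans (hdec (pv + d + 1) (by omega) (by omega) (by omega))
      (ih pv (by omega) (by omega))

/-- strictly increasing from `kk` on. -/
lemma chainInc {kk : ℕ}
    (hinc : ∀ (j : ℕ), kk ≤ j → ∀ (ha : j + 1 < m) (hb : j < m),
      idx ⟨j, hb⟩ < idx ⟨j + 1, ha⟩) :
    ∀ p q : Fin m, p < q → kk ≤ p.val → idx p < idx q := by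
  suffices H : ∀ d (pv : ℕ) (h1 : pv + d + 1 < m), kk ≤ pv →
      idx ⟨pv, by omega⟩ < idx ⟨pv + d + 1, h1⟩ by
    intro p q hpq hqk
    rw [Fin.lt_def] at hpq
    have hqm := q.isLt
    have h := H (q.val - p.val - 1) p.val (by omega) hqk
    have e1 : (⟨p.val + (q.val - p.val - 1) + 1, by omega⟩ : Fin m) = q :=
      Fin.ext (show p.val + (q.val - p.val - 1) + 1 = q.val by omega)
    have e2 : (⟨p.val, by omega⟩ : Fin m) = p := Fin.ext rfl
    rwa [e1, e2] at h
  intro d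
  induction d with
  | zero =>
    intro pv h1 h2
    exact hinc pv (by omega) (by omega) (by omega)
  | succ d ih =>
    intro pv h1 h2
    exact lt_trans (ih pv (by omega) (by omega))
      (hinc (pv + d + 1) (by omega) (by omega) (by omega))

lemma segT_conv {s : Fin m} {k k' l : Fin (offF n m)} (hk : k ∈ segT n s) (hk' : k' ∈ segT n s)
    (hm : min k k' < l) (hM : l < max k k') : l ∈ segT n s := by
  rw [mem_segT] at hk hk' ⊢
  have hmono : Monotone (σF n) := fun _ _ h => σF_mono h
  have h1 : σF n (min k k') ≤ σF n l := σF_mono hm.le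
  have h2 : σF n l ≤ σF n (max k k') := σF_mono hM.le
  rw [hmono.map_min, hk, hk', min_self] at h1
  rw [hmono.map_max, hk, hk', max_self] at h2
  exact le_antisymm h2 h1

lemma word_M2 (hφ : φ 1 = 1) (hindep : BMTIndep φ E A)
    (hdisj : ∀ j j', j ≠ j' → Disjoint (P j) (P j'))
    (hEdge : ∀ j j', j' < j → ∀ i ∈ P j, ∀ i' ∈ P j', E i i' ∧ ¬ E i' i)
    (hn : ∀ k, 0 < n k) (hlab : ∀ k j, lab k j ∈ P (idx k))
    (hu : ∀ k j, u k j ∈ A (lab k j))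
    (kk : ℕ) (hk : kk < m)
    (hdec : ∀ (j : ℕ), j + 1 ≤ kk → ∀ (ha : j + 1 < m) (hb : j < m),
      idx ⟨j + 1, ha⟩ < idx ⟨j, hb⟩)
    (hinc : ∀ (j : ℕ), kk ≤ j → ∀ (ha : j + 1 < m) (hb : j < m),
      idx ⟨j, hb⟩ < idx ⟨j + 1, ha⟩) :
    φ (List.ofFn (bF u)).prod = ∏ k : Fin m, φ (bF u k) := by
  have ha : ∀ t, aF u t ∈ A (ιF lab t) := fun t => hu _ _
  have hDec := chainDec (idx := idx) hk hdec
  have hInc := chainInc (idx := idx) hinc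
  set kkF : Fin m := ⟨kk, hk⟩ with hkkF
  have main : ∀ d s, s + d = m →
      ∏ B ∈ kerGBlocks E (ιF lab) (hiT n s), φ (blockProd (aF u) B)
        = ∏ k ∈ Finset.univ.filter (fun k : Fin m => s ≤ k.val), φ (bF u k) := by
    intro d
    induction d with
    | zero =>
      intro s hs
      have hsm : s = m := by omega
      rw [hsm, hiT_top]
      have h1 : (Finset.univ.filter (fun k : Fin m => m ≤ k.val)) = ∅ := by
        refine Finset.eq_empty_of_forall_notMem fun k hkk => ?_
        simp only [Finset.mem_filter] at hkk
        have h6 := k.isLt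
        omega
      rw [h1]
      simp [kerGBlocks]
    | succ d ih =>
      intro s hs
      have hsm : s < m := by omega
      have hcross : ∀ k ∈ segT n ⟨s, hsm⟩, ∀ k' ∈ hiT n s \ segT n ⟨s, hsm⟩,
          ¬ kerGRelOn E (ιF lab) (hiT n s) k k' := by
        intro k hkT k' hk' hrel
        have hσk : σF n k = ⟨s, hsm⟩ := mem_segT.1 hkT
        rw [Finset.mem_sdiff, mem_segT] at hk'
        have hk's : s ≤ (σF n k').val := by
          have h5 := hk'.1
          simp only [hiT, Finset.mem_filter] at h5
          exact h5.2
        have hlt : σF n k < σF n k' := by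
          rw [hσk, Fin.lt_def]
          rcases lt_or_eq_of_le hk's with h | h
          · exact h
          · exact absurd (Fin.ext h.symm : σF n k' = ⟨s, hsm⟩) hk'.2
        have hgl : idx (σF n k) = idx (σF n k') := glab (P := P) hdisj hlab hrel.1
        have hskk : σF n k < kkF := by
          by_contra hc
          have h := hInc (σF n k) (σF n k') hlt (Fin.le_def.1 (not_lt.1 hc))
          exact absurd hgl h.ne
        have hkkLt : kkF < σF n k' := by
          by_contra hc
          have h := hDec (σF n k) (σF n k') hlt (Fin.le_def.1 (not_lt.1 hc))
          exact absurd hgl h.ne'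
        have h3 : idx kkF < idx (σF n k) := hDec (σF n k) kkF hskk (le_refl kk)
        have h4 : segT n kkF ⊆ hiT n s := by
          intro t ht
          rw [mem_segT] at ht
          simp only [hiT, Finset.mem_filter, Finset.mem_univ, true_and]
          rw [ht]
          have h6 : (σF n k).val < kk := Fin.lt_def.1 hskk
          have h7 : (σF n k).val = s := congrArg Fin.val hσk
          show s ≤ kk
          omega
        exact blocked (E := E) (P := P) hn hdisj hlab hEdge (hiT n s) kkF
          (by rw [min_eq_left hlt.le]; exact hskk)
          (by rw [max_eq_right hlt.le]; exact hkkLt) h3 h4 hrel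
      have hconv : ∀ k ∈ segT n ⟨s, hsm⟩, ∀ k' ∈ segT n ⟨s, hsm⟩, ∀ l ∈ hiT n s,
          min k k' < l → l < max k k' → l ∈ segT n ⟨s, hsm⟩ :=
        fun k hk1 k' hk1' l _ hm5 hM5 => segT_conv hk1 hk1' hm5 hM5
      have hrest : ∀ k ∈ hiT n s \ segT n ⟨s, hsm⟩, ∀ k' ∈ hiT n s \ segT n ⟨s, hsm⟩,
          kerGRelOn E (ιF lab) (hiT n s \ segT n ⟨s, hsm⟩) k k' →
          kerGRelOn E (ιF lab) (hiT n s) k k' := by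
        intro k hkm k' hkm' hrel
        refine ⟨hrel.1, fun l hl hm5 hM5 hne => ?_⟩
        by_cases hls : l ∈ segT n ⟨s, hsm⟩
        · exfalso
          have hσl : σF n l = ⟨s, hsm⟩ := mem_segT.1 hls
          have hgt : ∀ x ∈ hiT n s \ segT n ⟨s, hsm⟩, l < x := by
            intro x hx
            rw [Finset.mem_sdiff, mem_segT] at hx
            have hxs : s ≤ (σF n x).val := by
              have h5 := hx.1
              simp only [hiT, Finset.mem_filter] at h5
              exact h5.2
            refine lt_of_σF_lt ?_
            rw [hσl, Fin.lt_def]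
            rcases lt_or_eq_of_le hxs with h | h
            · exact h
            · exact absurd (Fin.ext h.symm : σF n x = ⟨s, hsm⟩) hx.2
          exact lt_asymm hm5 (lt_min (hgt k hkm) (hgt k' hkm'))
        · exact hrel.2 l (Finset.mem_sdiff.2 ⟨hl, hls⟩) hm5 hM5 hne
      have hsplit := prod_kerGBlocks_split (E := E) (f := ιF lab)
        (F := fun B => φ (blockProd (aF u) B)) (segT_subset_hiT hsm) hcross hconv hrest
      have hseg : ∏ B ∈ kerGBlocks E (ιF lab) (segT n ⟨s, hsm⟩), φ (blockProd (aF u) B)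
          = φ (bF u ⟨s, hsm⟩) := by
        rw [← subword_formula φ E A hφ hindep (aF u) (ιF lab) ha (segT n ⟨s, hsm⟩),
          segT_map_prod]
      have hfil : Finset.univ.filter (fun k : Fin m => s ≤ k.val)
          = insert (⟨s, hsm⟩ : Fin m)
              (Finset.univ.filter (fun k : Fin m => s + 1 ≤ k.val)) := by
        ext k
        simp only [Finset.mem_filter, Finset.mem_insert, Finset.mem_univ, true_and, Fin.ext_iff]
        omega
      rw [hsplit, hseg, hiT_sdiff hsm, ih (s + 1) (by omega), hfil,
        Finset.prod_insert (by simp)]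
  have h0 : φ (List.ofFn (bF u)).prod
      = ∏ B ∈ kerGBlocks E (ιF lab) (Finset.univ), φ (blockProd (aF u) B) := by
    rw [← univ_sort_prod (u := u)]
    exact subword_formula φ E A hφ hindep (aF u) (ιF lab) ha Finset.univ
  have h1 := main m 0 (by omega)
  rw [hiT_zero] at h1
  rw [h0, h1]
  refine Finset.prod_congr ?_ (fun _ _ => rfl)
  ext k
  simp


lemma word_M1 (hφ : φ 1 = 1) (hindep : BMTIndep φ E A)
    (hdisj : ∀ j j', j ≠ j' → Disjoint (P j) (P j'))
    (hEdge : ∀ j j', j' < j → ∀ i ∈ P j, ∀ i' ∈ P j', E i i' ∧ ¬ E i' i)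
    (hn : ∀ k, 0 < n k) (hlab : ∀ k j, lab k j ∈ P (idx k))
    (hu : ∀ k j, u k j ∈ A (lab k j))
    (kk : ℕ) (hk1 : 1 ≤ kk) (hk2 : kk + 1 < m)
    (hL : idx ⟨kk - 1, Nat.lt_of_le_of_lt (Nat.sub_le kk 1) (Nat.lt_of_succ_lt hk2)⟩
      < idx ⟨kk, Nat.lt_of_succ_lt hk2⟩)
    (hR : idx ⟨kk + 1, hk2⟩ < idx ⟨kk, Nat.lt_of_succ_lt hk2⟩) :
    φ (List.ofFn (bF u)).prod
      = φ (bF u ⟨kk, Nat.lt_of_succ_lt hk2⟩) * φ ((List.ofFn (bF u)).eraseIdx kk).prod := by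
  have ha : ∀ t, aF u t ∈ A (ιF lab t) := fun t => hu _ _
  have hkm : kk < m := by omega
  have hLkk : (⟨kk - 1, by omega⟩ : Fin m) < ⟨kk, hkm⟩ := by
    rw [Fin.mk_lt_mk]; omega
  have hRkk : (⟨kk, hkm⟩ : Fin m) < ⟨kk + 1, hk2⟩ := by
    rw [Fin.mk_lt_mk]; omega
  have hcross : ∀ k ∈ segT n ⟨kk, hkm⟩, ∀ k' ∈ Finset.univ \ segT n ⟨kk, hkm⟩,
      ¬ kerGRelOn E (ιF lab) Finset.univ k k' := by
    intro k hkT k' hk' hrel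
    have hσk : σF n k = ⟨kk, hkm⟩ := mem_segT.1 hkT
    rw [Finset.mem_sdiff, mem_segT] at hk'
    have hgl : idx (σF n k) = idx (σF n k') := glab (P := P) hdisj hlab hrel.1
    rcases lt_trichotomy (σF n k') ⟨kk, hkm⟩ with hlt | heq | hgt
    · have hne1 : σF n k' ≠ ⟨kk - 1, by omega⟩ := by
        intro hc
        rw [hσk, hc] at hgl
        exact hL.ne hgl.symm
      have hlt2 : σF n k' < ⟨kk - 1, by omega⟩ := by
        rw [Fin.lt_def] at hlt ⊢
        have h5 : (σF n k').val ≠ kk - 1 := fun hc => hne1 (Fin.ext hc)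
        simp only at hlt ⊢
        omega
      have hks : σF n k' < σF n k := by rw [hσk]; exact hlt
      exact blocked (E := E) (P := P) hn hdisj hlab hEdge Finset.univ ⟨kk - 1, by omega⟩
        (by rw [min_eq_right hks.le]; exact hlt2)
        (by rw [max_eq_left hks.le, hσk]; exact hLkk)
        (by rw [hσk]; exact hL) (Finset.subset_univ _) hrel
    · exact hk'.2 heq
    · have hne1 : σF n k' ≠ ⟨kk + 1, hk2⟩ := by
        intro hc
        rw [hσk, hc] at hgl
        exact hR.ne hgl.symm
      have hlt2 : (⟨kk + 1, hk2⟩ : Fin m) < σF n k' := by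
        rw [Fin.lt_def] at hgt ⊢
        have h5 : (σF n k').val ≠ kk + 1 := fun hc => hne1 (Fin.ext hc)
        simp only at hgt ⊢
        omega
      have hks : σF n k < σF n k' := by rw [hσk]; exact hgt
      exact blocked (E := E) (P := P) hn hdisj hlab hEdge Finset.univ ⟨kk + 1, hk2⟩
        (by rw [min_eq_left hks.le, hσk]; exact hRkk)
        (by rw [max_eq_right hks.le]; exact hlt2)
        (by rw [hσk]; exact hR) (Finset.subset_univ _) hrel
  have hconv : ∀ k ∈ segT n ⟨kk, hkm⟩, ∀ k' ∈ segT n ⟨kk, hkm⟩, ∀ l ∈ (Finset.univ : Finset (Fin (offF n m))),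
      min k k' < l → l < max k k' → l ∈ segT n ⟨kk, hkm⟩ :=
    fun k hka k' hkb l _ hm5 hM5 => segT_conv hka hkb hm5 hM5
  have hrest : ∀ k ∈ Finset.univ \ segT n ⟨kk, hkm⟩, ∀ k' ∈ Finset.univ \ segT n ⟨kk, hkm⟩,
      kerGRelOn E (ιF lab) (Finset.univ \ segT n ⟨kk, hkm⟩) k k' →
      kerGRelOn E (ιF lab) Finset.univ k k' := by
    intro k₀ hm0 k₁ hm1 hrel
    refine ⟨hrel.1, fun l _ hm5 hM5 hne => ?_⟩
    by_cases hσl : σF n l = ⟨kk, hkm⟩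
    · have hp_mem : min k₀ k₁ ∈ Finset.univ \ segT n ⟨kk, hkm⟩ := by
        rcases min_choice k₀ k₁ with h | h <;> rw [h] <;> assumption
      have hq_mem : max k₀ k₁ ∈ Finset.univ \ segT n ⟨kk, hkm⟩ := by
        rcases max_choice k₀ k₁ with h | h <;> rw [h] <;> assumption
      have hσp_ne : σF n (min k₀ k₁) ≠ ⟨kk, hkm⟩ := fun hc =>
        (Finset.mem_sdiff.1 hp_mem).2 (mem_segT.2 hc)
      have hσq_ne : σF n (max k₀ k₁) ≠ ⟨kk, hkm⟩ := fun hc =>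
        (Finset.mem_sdiff.1 hq_mem).2 (mem_segT.2 hc)
      have h5 : σF n (min k₀ k₁) ≤ σF n l := σF_mono hm5.le
      have h6 : σF n l ≤ σF n (max k₀ k₁) := σF_mono hM5.le
      rw [hσl] at h5 h6
      have hplt : σF n (min k₀ k₁) < ⟨kk, hkm⟩ := lt_of_le_of_ne h5 hσp_ne
      have hqgt : (⟨kk, hkm⟩ : Fin m) < σF n (max k₀ k₁) := lt_of_le_of_ne h6 (Ne.symm hσq_ne)
      have hιp : ιF lab (min k₀ k₁) = ιF lab k₀ := by
        rcases min_choice k₀ k₁ with h | h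
        · rw [h]
        · rw [h]; exact hrel.1.symm
      have hj : idx (σF n (min k₀ k₁)) = idx (σF n k₀) := glab (P := P) hdisj hlab hιp
      have hclaim : idx (σF n k₀) < idx ⟨kk, hkm⟩ := by
        rw [← hj]
        by_cases hpe : σF n (min k₀ k₁) = ⟨kk - 1, by omega⟩
        · rw [hpe]; exact hL
        · have hplt2 : σF n (min k₀ k₁) < ⟨kk - 1, by omega⟩ := by
            have h7 : (σF n (min k₀ k₁)).val ≠ kk - 1 := fun hc => hpe (Fin.ext hc)
            rw [Fin.lt_def] at hplt ⊢
            simp only at hplt ⊢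
            omega
          obtain ⟨u0, hσu⟩ : ∃ u0 : Fin (offF n m), σF n u0 = ⟨kk - 1, by omega⟩ :=
            ⟨embF n ⟨kk - 1, by omega⟩ ⟨0, hn _⟩, σF_embF _ _⟩
          have hpu : min k₀ k₁ < u0 := lt_of_σF_lt (by rw [hσu]; exact hplt2)
          have huq : u0 < max k₀ k₁ := lt_of_σF_lt (by rw [hσu]; exact lt_trans hLkk hqgt)
          have hu0mem : u0 ∈ Finset.univ \ segT n ⟨kk, hkm⟩ := by
            refine Finset.mem_sdiff.2 ⟨Finset.mem_univ _, fun hc => ?_⟩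
            have h7 := mem_segT.1 hc
            rw [hσu] at h7
            have h8 := congrArg Fin.val h7
            simp only at h8
            omega
          by_cases hcu : ιF lab u0 = ιF lab k₀
          · have h7 : idx (⟨kk - 1, by omega⟩ : Fin m) = idx (σF n k₀) := by
              rw [← hσu]; exact glab (P := P) hdisj hlab hcu
            rw [hj, ← h7]; exact hL
          · have hEu := hrel.2 _ hu0mem hpu huq hcu
            rcases lt_trichotomy (idx (⟨kk - 1, by omega⟩ : Fin m)) (idx (σF n k₀))
              with h7 | h7 | h7
            · exfalso
              have hPu : ιF lab u0 ∈ P (idx (σF n u0)) := hlab _ _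
              rw [hσu] at hPu
              exact (hEdge (idx (σF n k₀)) (idx ⟨kk - 1, by omega⟩) h7 (ιF lab k₀)
                (hlab _ _) (ιF lab u0) hPu).2 hEu
            · rw [hj, ← h7]; exact hL
            · rw [hj]; exact lt_trans h7 hL
      have hPl : ιF lab l ∈ P (idx ⟨kk, hkm⟩) := by rw [← hσl]; exact hlab _ _
      exact (hEdge (idx ⟨kk, hkm⟩) (idx (σF n k₀)) hclaim (ιF lab l) hPl (ιF lab k₀)
        (hlab _ _)).1
    · exact hrel.2 l
        (Finset.mem_sdiff.2 ⟨Finset.mem_univ l, fun hc => hσl (mem_segT.1 hc)⟩) hm5 hM5 hne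
  have hsplit := prod_kerGBlocks_split (E := E) (f := ιF lab)
    (F := fun B => φ (blockProd (aF u) B)) (Finset.subset_univ (segT n ⟨kk, hkm⟩))
    hcross hconv hrest
  have h0 : φ (List.ofFn (bF u)).prod
      = ∏ B ∈ kerGBlocks E (ιF lab) (Finset.univ), φ (blockProd (aF u) B) := by
    rw [← univ_sort_prod (u := u)]
    exact subword_formula φ E A hφ hindep (aF u) (ιF lab) ha Finset.univ
  have hseg : ∏ B ∈ kerGBlocks E (ιF lab) (segT n ⟨kk, hkm⟩), φ (blockProd (aF u) B)
      = φ (bF u ⟨kk, hkm⟩) := by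
    rw [← subword_formula φ E A hφ hindep (aF u) (ιF lab) ha (segT n ⟨kk, hkm⟩),
      segT_map_prod]
  have hrest2 : ∏ B ∈ kerGBlocks E (ιF lab) (Finset.univ \ segT n ⟨kk, hkm⟩),
      φ (blockProd (aF u) B) = φ ((List.ofFn (bF u)).eraseIdx kk).prod := by
    rw [← subword_formula φ E A hφ hindep (aF u) (ιF lab) ha
      (Finset.univ \ segT n ⟨kk, hkm⟩), compl_seg_prod (u := u) hkm]
  rw [h0, hsplit, hseg, hrest2]


end WordCase


section Reduce

variable {𝒜 : Type*} [Ring 𝒜] [Algebra ℂ 𝒜]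

lemma span_reduce {m : ℕ} (W : Fin m → Set 𝒜) (Q : (Fin m → 𝒜) → Prop)
    (hzero : ∀ (c : Fin m → 𝒜) (k : Fin m), Q (Function.update c k 0))
    (hadd : ∀ (c : Fin m → 𝒜) (k : Fin m) (x y : 𝒜),
      Q (Function.update c k x) → Q (Function.update c k y) → Q (Function.update c k (x + y)))
    (hsmul : ∀ (c : Fin m → 𝒜) (k : Fin m) (r : ℂ) (x : 𝒜),
      Q (Function.update c k x) → Q (Function.update c k (r • x)))
    (hword : ∀ c : Fin m → 𝒜, (∀ k, c k ∈ W k) → Q c) :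
    ∀ c : Fin m → 𝒜, (∀ k, c k ∈ Submodule.span ℂ (W k)) → Q c := by
  suffices H : ∀ s : Finset (Fin m), ∀ c : Fin m → 𝒜,
      (∀ k, c k ∈ Submodule.span ℂ (W k)) → (∀ k, k ∉ s → c k ∈ W k) → Q c by
    intro c hc
    exact H Finset.univ c hc fun k hk => absurd (Finset.mem_univ k) hk
  intro s
  induction s using Finset.induction_on with
  | empty => intro c hc hout; exact hword c fun k => hout k (Finset.notMem_empty k)
  | @insert k s hks ih =>
    intro c hc hout
    have key : ∀ (x : 𝒜), x ∈ Submodule.span ℂ (W k) → Q (Function.update c k x) := by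
      intro x hx
      induction hx using Submodule.span_induction with
      | mem z hz =>
        refine ih (Function.update c k z) (fun k' => ?_) (fun k' hk' => ?_)
        · by_cases h : k' = k
          · subst h; rw [Function.update_self]; exact Submodule.subset_span hz
          · rw [Function.update_of_ne h]; exact hc k'
        · by_cases h : k' = k
          · subst h; rw [Function.update_self]; exact hz
          · rw [Function.update_of_ne h]; exact hout k' (by simp [h, hk'])
      | zero => exact hzero c k
      | add x y hx hy ihx ihy => exact hadd c k x y ihx ihy
      | smul r x hx ihx => exact hsmul c k r x ihx
    have h9 := key (c k) (hc k)
    rwa [Function.update_eq_self] at h9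

/-- the set of non-trivial words from the `A i`, `i ∈ P j`. -/
def Wset {I J : Type*} (A : I → NonUnitalSubalgebra ℂ 𝒜) (P : J → Set I) (j : J) : Set 𝒜 :=
  {x | ∃ l : List 𝒜, l ≠ [] ∧ (∀ y ∈ l, y ∈ ⋃ i ∈ P j, (A i : Set 𝒜)) ∧ l.prod = x}

lemma mem_span_Wset {I J : Type*} {A : I → NonUnitalSubalgebra ℂ 𝒜} {P : J → Set I}
    {B : J → NonUnitalSubalgebra ℂ 𝒜}
    (hB : ∀ j, B j = NonUnitalAlgebra.adjoin ℂ (⋃ i ∈ P j, (A i : Set 𝒜)))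
    {j : J} {x : 𝒜} (hx : x ∈ B j) : x ∈ Submodule.span ℂ (Wset A P j) := by
  rw [hB j] at hx
  have h1 : x ∈ Submodule.span ℂ
      ((Subsemigroup.closure (⋃ i ∈ P j, (A i : Set 𝒜)) : Subsemigroup 𝒜) : Set 𝒜) := by
    rw [← NonUnitalAlgebra.adjoin_eq_span]
    exact hx
  have hsub : ((Subsemigroup.closure (⋃ i ∈ P j, (A i : Set 𝒜)) : Subsemigroup 𝒜) : Set 𝒜)
      ⊆ Wset A P j := by
    intro y hy
    induction hy using Subsemigroup.closure_induction with
    | mem z hz => exact ⟨[z], by simp, by simpa using hz, by simp⟩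
    | mul a b ha hb iha ihb =>
      obtain ⟨la, hla, hma, hpa⟩ := iha
      obtain ⟨lb, hlb, hmb, hpb⟩ := ihb
      refine ⟨la ++ lb, by simp [hla], fun y hy => ?_, by rw [List.prod_append, hpa, hpb]⟩
      rcases List.mem_append.1 hy with h | h
      exacts [hma y h, hmb y h]
  exact Submodule.span_mono hsub h1

lemma prod_ofFn_update (c : Fin m' → 𝒜) (k : Fin m') (x : 𝒜) :
    (List.ofFn (Function.update c k x)).prod
      = ((List.ofFn c).take k.val).prod * x * ((List.ofFn c).drop (k.val + 1)).prod := by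
  rw [ofFn_update, List.prod_set, if_pos (by simpa using k.isLt)]

lemma eraseIdx_ofFn_update_same {m' : ℕ} (c : Fin m' → 𝒜) (k : Fin m') (x : 𝒜) :
    (List.ofFn (Function.update c k x)).eraseIdx k.val = (List.ofFn c).eraseIdx k.val := by
  rw [ofFn_update, List.eraseIdx_eq_take_drop_succ, List.eraseIdx_eq_take_drop_succ,
    take_set_of_le _ _ (le_refl k.val), drop_set_of_lt _ _ (Nat.lt_succ_self _)]

lemma erase_update {m' : ℕ} (c : Fin m' → 𝒜) (k : Fin m') (kk : ℕ) (hne : k.val ≠ kk) :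
    ∃ L R : 𝒜, ∀ x, ((List.ofFn (Function.update c k x)).eraseIdx kk).prod = L * x * R := by
  rcases lt_or_gt_of_ne hne with h | h
  · refine ⟨((List.ofFn c).take k.val).prod,
      (((List.ofFn c).take kk).drop (k.val + 1)).prod * ((List.ofFn c).drop (kk + 1)).prod,
      fun x => ?_⟩
    rw [ofFn_update, List.eraseIdx_eq_take_drop_succ, take_set_of_lt _ _ h,
      drop_set_of_lt _ _ (by omega), List.prod_append, List.prod_set,
      if_pos (by simpa using (by omega : k.val < min kk m')), List.take_take,
      min_eq_left h.le, mul_assoc]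
  · refine ⟨((List.ofFn c).take kk).prod * (((List.ofFn c).drop (kk + 1)).take
        (k.val - (kk + 1))).prod,
      (((List.ofFn c).drop (kk + 1)).drop (k.val - (kk + 1) + 1)).prod, fun x => ?_⟩
    rw [ofFn_update, List.eraseIdx_eq_take_drop_succ, take_set_of_le _ _ (by omega),
      drop_set_of_le _ _ (by omega), List.prod_append, List.prod_set,
      if_pos (by simp; omega), ← mul_assoc, ← mul_assoc]

end Reduce


/-- consistency, monotone case. If `J` is totally ordered and edges between
distinct groups go exactly from the larger group to the smaller one, the generated
subalgebras are monotone independent. -/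
theorem stmt10 {𝒜 : Type*} [Ring 𝒜] [Algebra ℂ 𝒜] (φ : 𝒜 →ₗ[ℂ] ℂ) (hφ : φ 1 = 1)
    {I J : Type*} [LinearOrder J] (E : I → I → Prop) (hE : ∀ v, ¬ E v v)
    (A : I → NonUnitalSubalgebra ℂ 𝒜) (hindep : BMTIndep φ E A)
    (P : J → Set I) (hne : ∀ j, (P j).Nonempty)
    (hdisj : ∀ j j', j ≠ j' → Disjoint (P j) (P j'))
    (hcover : ∀ i, ∃ j, i ∈ P j)
    (B : J → NonUnitalSubalgebra ℂ 𝒜)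
    (hB : ∀ j, B j = NonUnitalAlgebra.adjoin ℂ (⋃ i ∈ P j, (A i : Set 𝒜)))
    (hEdge : ∀ j j', j' < j → ∀ i ∈ P j, ∀ i' ∈ P j', E i i' ∧ ¬ E i' i) :
    ∀ (m : ℕ), 1 ≤ m → ∀ (idx : Fin m → J) (b : Fin m → 𝒜),
      (∀ k, b k ∈ B (idx k)) →
      (∀ (k : ℕ) (h : k + 1 < m), idx ⟨k, by omega⟩ ≠ idx ⟨k + 1, h⟩) →
      ((∀ (k : ℕ) (h1 : 1 ≤ k) (h2 : k + 1 < m),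
          idx ⟨k - 1, by omega⟩ < idx ⟨k, by omega⟩ →
          idx ⟨k + 1, h2⟩ < idx ⟨k, by omega⟩ →
          φ (List.ofFn b).prod
            = φ (b ⟨k, by omega⟩) * φ ((List.ofFn b).eraseIdx k).prod)
        ∧
        (∀ (k : ℕ) (hk : k < m),
          (∀ (j : ℕ) (hj : j + 1 ≤ k), idx ⟨j + 1, by omega⟩ < idx ⟨j, by omega⟩) →
          (∀ (j : ℕ) (hj : k ≤ j) (hj2 : j + 1 < m), idx ⟨j, by omega⟩ < idx ⟨j + 1, hj2⟩) →
          φ (List.ofFn b).prod = ∏ k : Fin m, φ (b k))) := by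
  intro m hm idx b hbmem _halt
  have hbspan : ∀ k, b k ∈ Submodule.span ℂ (Wset A P (idx k)) :=
    fun k => mem_span_Wset hB (hbmem k)
  have hcomp : ∀ (c : Fin m → 𝒜) (k : Fin m) (z : 𝒜),
      (∏ k' : Fin m, φ (Function.update c k z k'))
        = φ z * ∏ k' ∈ Finset.univ \ {k}, φ (c k') := by
    intro c k z
    have e : (fun k' => φ (Function.update c k z k'))
        = Function.update (fun k' => φ (c k')) k (φ z) := by
      funext k'
      by_cases h : k' = k
      · subst h; simp
      · simp [Function.update_of_ne h]
    calc (∏ k' : Fin m, φ (Function.update c k z k'))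
        = ∏ k' : Fin m, Function.update (fun k'' => φ (c k'')) k (φ z) k' := by rw [← e]
      _ = φ z * ∏ k' ∈ Finset.univ \ {k}, φ (c k') :=
          Finset.prod_update_of_mem (Finset.mem_univ k) _ _
  constructor
  · -- M.1 : peak case
    intro kk hk1 hk2 hpL hpR
    refine span_reduce (W := fun k' => Wset A P (idx k'))
      (fun c => φ (List.ofFn c).prod
        = φ (c ⟨kk, by omega⟩) * φ ((List.ofFn c).eraseIdx kk).prod)
      ?_ ?_ ?_ ?_ b hbspan
    · -- zero
      intro c k
      by_cases hkc : k = (⟨kk, by omega⟩ : Fin m)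
      · subst hkc
        rw [prod_ofFn_update, Function.update_self]
        simp
      · obtain ⟨L, R, hLR⟩ := erase_update c k kk (fun hc => hkc (Fin.ext hc))
        rw [prod_ofFn_update, hLR, Function.update_of_ne (Ne.symm hkc)]
        simp
    · -- add
      intro c k x y hx hy
      by_cases hkc : k = (⟨kk, by omega⟩ : Fin m)
      · subst hkc
        rw [prod_ofFn_update, Function.update_self, eraseIdx_ofFn_update_same] at hx hy ⊢
        simp only [mul_add, add_mul, map_add, hx, hy]
        try ring
      · obtain ⟨L, R, hLR⟩ := erase_update c k kk (fun hc => hkc (Fin.ext hc))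
        rw [prod_ofFn_update, Function.update_of_ne (Ne.symm hkc), hLR] at hx hy ⊢
        simp only [mul_add, add_mul, map_add, hx, hy]
        try ring
    · -- smul
      intro c k r x hx
      by_cases hkc : k = (⟨kk, by omega⟩ : Fin m)
      · subst hkc
        rw [prod_ofFn_update, Function.update_self, eraseIdx_ofFn_update_same] at hx ⊢
        simp only [mul_smul_comm, smul_mul_assoc, map_smul, smul_eq_mul, hx]
        try ring
      · obtain ⟨L, R, hLR⟩ := erase_update c k kk (fun hc => hkc (Fin.ext hc))
        rw [prod_ofFn_update, Function.update_of_ne (Ne.symm hkc), hLR] at hx ⊢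
        simp only [mul_smul_comm, smul_mul_assoc, map_smul, smul_eq_mul, hx]
        try ring
    · -- word case
      intro c hc
      choose l hlne hlmem hlprod using hc
      have hmem' : ∀ (k' : Fin m) (j : Fin (l k').length),
          ∃ i, i ∈ P (idx k') ∧ (l k').get j ∈ A i := by
        intro k' j
        have h5 : (l k').get j ∈ l k' := List.get_mem (l k') j
        have h6 := hlmem k' _ h5
        simpa using (Set.mem_iUnion₂.1 h6)
      choose lab hlabP hlabA using hmem'
      have hbf : BMTAux.bF (fun k' (j : Fin (l k').length) => (l k').get j) = c := by
        funext k'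
        show (List.ofFn ((l k').get)).prod = c k'
        rw [List.ofFn_get]
        exact hlprod k'
      have h := word_M1 (idx := idx) (n := fun k' => (l k').length)
        (u := fun k' (j : Fin (l k').length) => (l k').get j) (lab := lab)
        φ E A P hφ hindep hdisj hEdge
        (fun k' => List.length_pos_iff.2 (hlne k')) hlabP hlabA kk hk1 hk2 hpL hpR
      rw [hbf] at h
      exact h
  · -- M.2 : valley case
    intro kk hkk hdec hinc
    have hdec' : ∀ (j : ℕ), j + 1 ≤ kk → ∀ (ha : j + 1 < m) (hb : j < m),
        idx ⟨j + 1, ha⟩ < idx ⟨j, hb⟩ := fun j hj ha hb => hdec j hj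
    have hinc' : ∀ (j : ℕ), kk ≤ j → ∀ (ha : j + 1 < m) (hb : j < m),
        idx ⟨j, hb⟩ < idx ⟨j + 1, ha⟩ := fun j hj ha hb => hinc j hj ha
    refine span_reduce (W := fun k' => Wset A P (idx k'))
      (fun c => φ (List.ofFn c).prod = ∏ k' : Fin m, φ (c k'))
      ?_ ?_ ?_ ?_ b hbspan
    · -- zero
      intro c k
      rw [prod_ofFn_update, hcomp c k 0]
      simp
    · -- add
      intro c k x y hx hy
      rw [prod_ofFn_update, hcomp c k x] at hx
      rw [prod_ofFn_update, hcomp c k y] at hy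
      rw [prod_ofFn_update, hcomp c k (x + y)]
      simp only [mul_add, add_mul, map_add, hx, hy]
      try ring
    · -- smul
      intro c k r x hx
      rw [prod_ofFn_update, hcomp c k x] at hx
      rw [prod_ofFn_update, hcomp c k (r • x)]
      simp only [mul_smul_comm, smul_mul_assoc, map_smul, smul_eq_mul, hx]
      try ring
    · -- word case
      intro c hc
      choose l hlne hlmem hlprod using hc
      have hmem' : ∀ (k' : Fin m) (j : Fin (l k').length),
          ∃ i, i ∈ P (idx k') ∧ (l k').get j ∈ A i := by
        intro k' j
        have h5 : (l k').get j ∈ l k' := List.get_mem (l k') j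
        have h6 := hlmem k' _ h5
        simpa using (Set.mem_iUnion₂.1 h6)
      choose lab hlabP hlabA using hmem'
      have hbf : BMTAux.bF (fun k' (j : Fin (l k').length) => (l k').get j) = c := by
        funext k'
        show (List.ofFn ((l k').get)).prod = c k'
        rw [List.ofFn_get]
        exact hlprod k'
      have h := word_M2 (idx := idx) (n := fun k' => (l k').length)
        (u := fun k' (j : Fin (l k').length) => (l k').get j) (lab := lab)
        φ E A P hφ hindep hdisj hEdge
        (fun k' => List.length_pos_iff.2 (hlne k')) hlabP hlabA kk hkk hdec' hinc'
      rw [hbf] at h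
      exact h


end
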